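/- Let f₀(z) = z(1+z)²/(1−z) and g₀(z) = z(1+z)/(1−z) on the unit disk. Then |f₀(z)/g₀(z) − 1| = |z| < 1 on 𝔻, Re(g₀(z)/z) > 0 on 𝔻, z f₀'(z)/f₀(z) = (1 + 3z − 2z²)/(1−z²), and at z = −r with r = (2√3 − 3)/3, one has |z f₀'(z)/f₀(z) − 1| = Re(z f₀'(z)/f₀(z)). -/

import Mathlib

open Metric Real

lemma f0_deriv (z : ℂ) (h : (1:ℂ) - z ≠ 0) :
    HasDerivAt (fun z : ℂ => z * (1 + z) ^ 2 / (1 - z))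
      ((1 + z) * (1 + 3 * z - 2 * z ^ 2) / (1 - z) ^ 2) z := by
  have hN : HasDerivAt (fun z : ℂ => z * (1 + z) ^ 2)
      (1 * (1 + z) ^ 2 + z * ((2 : ℕ) * (1 + z) ^ 1 * 1)) z :=
    (hasDerivAt_id z).mul (((hasDerivAt_id z).const_add 1).pow 2)
  have hD : HasDerivAt (fun z : ℂ => (1 : ℂ) - z) (-1) z := by
    simpa using (hasDerivAt_id z).const_sub 1
  have : HasDerivAt (fun z : ℂ => z * (1 + z) ^ 2 / (1 - z)) _ z := hN.div hD h
  convert this using 1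
  push_cast
  ring

lemma ball_facts (z : ℂ) (hz : z ∈ ball (0:ℂ) 1) :
    ‖z‖ < 1 ∧ (1:ℂ) - z ≠ 0 ∧ (1:ℂ) + z ≠ 0 := by
  rw [mem_ball, dist_zero_right] at hz
  refine ⟨hz, ?_, ?_⟩
  · intro h
    have : z = 1 := by linear_combination -h
    simp [this] at hz
  · intro h
    have : z = -1 := by linear_combination h
    simp [this] at hz

theorem F3_parabolic_extremal
    (f₀ g₀ : ℂ → ℂ)
    (hf₀ : ∀ z : ℂ, f₀ z = z * (1 + z) ^ 2 / (1 - z))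
    (hg₀ : ∀ z : ℂ, g₀ z = z * (1 + z) / (1 - z)) :
    (∀ z ∈ ball (0 : ℂ) 1, z ≠ 0 →
      ‖f₀ z / g₀ z - 1‖ = ‖z‖ ∧ ‖z‖ < 1 ∧
      0 < (g₀ z / z).re) ∧
    (∀ z ∈ ball (0 : ℂ) 1, z ≠ 0 →
      z * deriv f₀ z / f₀ z = (1 + 3 * z - 2 * z ^ 2) / (1 - z ^ 2)) ∧
    (let r : ℝ := (2 * Real.sqrt 3 - 3) / 3
     let z : ℂ := -(r : ℂ)
     ‖z * deriv f₀ z / f₀ z - 1‖ = (z * deriv f₀ z / f₀ z).re) := by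
  have hf₀' : f₀ = fun z : ℂ => z * (1 + z) ^ 2 / (1 - z) := funext hf₀
  have part2 : ∀ z ∈ ball (0 : ℂ) 1, z ≠ 0 →
      z * deriv f₀ z / f₀ z = (1 + 3 * z - 2 * z ^ 2) / (1 - z ^ 2) := by
    intro z hz hz0
    obtain ⟨habs, h1, h2⟩ := ball_facts z hz
    have hd : deriv f₀ z = (1 + z) * (1 + 3 * z - 2 * z ^ 2) / (1 - z) ^ 2 := by
      rw [hf₀']; exact (f0_deriv z h1).deriv
    rw [hd, hf₀ z]
    have h12 : (1:ℂ) - z ^ 2 ≠ 0 := by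
      intro h
      have : ((1:ℂ) - z) * (1 + z) = 0 := by linear_combination h
      rcases mul_eq_zero.mp this with h | h
      exacts [h1 h, h2 h]
    field_simp
    ring
  refine ⟨?_, part2, ?_⟩
  · intro z hz hz0
    obtain ⟨habs, h1, h2⟩ := ball_facts z hz
    refine ⟨?_, habs, ?_⟩
    · have : f₀ z / g₀ z - 1 = z := by
        rw [hf₀, hg₀]; field_simp; ring
      rw [this]
    · have : g₀ z / z = (1 + z) / (1 - z) := by
        rw [hg₀]; field_simp
      rw [this, Complex.div_re, ← add_div]
      have hns : 0 < Complex.normSq (1 - z) := by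
        simpa using Complex.normSq_pos.mpr h1
      have hlt : Complex.normSq z < 1 := by
        have := Complex.sq_norm z
        nlinarith [habs, norm_nonneg z]
      have hnum : (1 + z).re * (1 - z).re + (1 + z).im * (1 - z).im
          = 1 - Complex.normSq z := by
        simp [Complex.normSq_apply, Complex.add_re, Complex.sub_re,
          Complex.add_im, Complex.sub_im]
        ring
      rw [hnum]
      exact div_pos (by linarith) hns
  · intro r z
    have hs : Real.sqrt 3 ^ 2 = 3 := Real.sq_sqrt (by norm_num)
    have hs1 : (1:ℝ) < Real.sqrt 3 := by nlinarith [Real.sqrt_nonneg 3]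
    have hs2 : Real.sqrt 3 < 2 := by nlinarith [Real.sqrt_nonneg 3]
    have hr0 : 0 < r := by simp only [r]; nlinarith
    have hr1 : r < 1 := by simp only [r]; nlinarith
    have hzball : z ∈ ball (0:ℂ) 1 := by
      simp only [z, mem_ball, dist_zero_right, norm_neg, Complex.norm_real,
        Real.norm_eq_abs, abs_of_pos hr0]
      exact hr1
    have hz0 : z ≠ 0 := by
      simp only [z, ne_eq, neg_eq_zero, Complex.ofReal_eq_zero]
      exact ne_of_gt hr0
    have key : z * deriv f₀ z / f₀ z = 1/2 := by
      rw [part2 z hzball hz0]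
      have hroot : 1 + 3 * z - 2 * z ^ 2 = (1/2) * (1 - z ^ 2) := by
        simp only [z]
        have : (1:ℝ) + 6 * (-r) - 3 * (-r)^2 = 0 := by
          simp only [r]; nlinarith
        have h2 : ((1:ℂ) + 6 * (-(r:ℂ)) - 3 * (-(r:ℂ))^2) = 0 := by
          rw [show (1:ℂ) + 6 * (-(r:ℂ)) - 3 * (-(r:ℂ))^2
              = ((1 + 6 * (-r) - 3 * (-r)^2 : ℝ) : ℂ) by push_cast; ring,
            this, Complex.ofReal_zero]
        linear_combination (1/2 : ℂ) * h2
      have h12 : (1:ℂ) - z ^ 2 ≠ 0 := by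
        obtain ⟨_, h1, h2⟩ := ball_facts z hzball
        intro h
        have : ((1:ℂ) - z) * (1 + z) = 0 := by linear_combination h
        rcases mul_eq_zero.mp this with h | h
        exacts [h1 h, h2 h]
      rw [hroot, mul_div_assoc, div_self h12, mul_one]
    rw [key]
    norm_num
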